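/- Let k > 0, let n ≥ 1 be an integer, and let β ∈ ℝ with β + μ_n(k) < 0. Then the two functions u_n^±(x) = ±(1/(nπ))·√(−2(β + μ_n(k)))·sin(nπx) are nonzero solutions of the stationary beam problem with f = 0. -/

import Mathlib

open Real Set

/-- `μ_n(k) = k/(n²π²) + n²π²`. -/
noncomputable def mu (k : ℝ) (n : ℕ) : ℝ := k / ((n : ℝ)^2 * π^2) + (n : ℝ)^2 * π^2

/-- `β_c(k) = min_{n ≥ 1} μ_n(k)`. -/
noncomputable def betaC (k : ℝ) : ℝ := sInf {x : ℝ | ∃ n : ℕ, 1 ≤ n ∧ x = mu k n}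

/-- `u` is a solution of the stationary beam problem with `f = 0`:
`u ∈ C⁴([0,1])`, `u'''' - (β + ∫₀¹ u'(ξ)² dξ) u'' + k u = 0` on `[0,1]`,
with hinged boundary conditions. -/
def IsStatSol (k β : ℝ) (u : ℝ → ℝ) : Prop :=
  ContDiffOn ℝ 4 u (Icc (0:ℝ) 1) ∧
  (∀ x ∈ Icc (0:ℝ) 1,
    iteratedDerivWithin 4 u (Icc (0:ℝ) 1) x
      - (β + ∫ ξ in (0:ℝ)..1, (iteratedDerivWithin 1 u (Icc (0:ℝ) 1) ξ)^2)
        * iteratedDerivWithin 2 u (Icc (0:ℝ) 1) x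
      + k * u x = 0) ∧
  u 0 = 0 ∧ u 1 = 0 ∧
  iteratedDerivWithin 2 u (Icc (0:ℝ) 1) 0 = 0 ∧
  iteratedDerivWithin 2 u (Icc (0:ℝ) 1) 1 = 0

section aux

variable (a c : ℝ)

lemma aux_hasDerivAt_sin (x : ℝ) :
    HasDerivAt (fun x => c * Real.sin (a*x)) (c * a * Real.cos (a*x)) x := by
  have h : HasDerivAt (fun x : ℝ => a * x) a x := by
    simpa using (hasDerivAt_id x).const_mul a
  have := ((Real.hasDerivAt_sin (a*x)).comp x h).const_mul c
  exact this.congr_deriv (by ring)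

lemma aux_hasDerivAt_cos (x : ℝ) :
    HasDerivAt (fun x => c * Real.cos (a*x)) (-(c * a) * Real.sin (a*x)) x := by
  have h : HasDerivAt (fun x : ℝ => a * x) a x := by
    simpa using (hasDerivAt_id x).const_mul a
  have := ((Real.hasDerivAt_cos (a*x)).comp x h).const_mul c
  exact this.congr_deriv (by ring)

variable {s : Set ℝ} (hs : UniqueDiffOn ℝ s)
include hs

lemma aux_d1 : ∀ x ∈ s, iteratedDerivWithin 1 (fun x => c * Real.sin (a*x)) s x
    = c * a * Real.cos (a*x) := by
  intro x hx
  rw [iteratedDerivWithin_one]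
  exact ((aux_hasDerivAt_sin a c x).hasDerivWithinAt).derivWithin (hs x hx)

lemma aux_d2 : ∀ x ∈ s, iteratedDerivWithin 2 (fun x => c * Real.sin (a*x)) s x
    = -(c * a^2) * Real.sin (a*x) := by
  intro x hx
  rw [show (2:ℕ) = 1 + 1 from rfl, iteratedDerivWithin_succ]
  rw [derivWithin_congr (aux_d1 a c hs) (aux_d1 a c hs x hx)]
  have := (aux_hasDerivAt_cos a (c*a) x).hasDerivWithinAt.derivWithin (hs x hx)
  rw [show (fun x => c * a * Real.cos (a*x)) = (fun x => (c*a) * Real.cos (a*x)) from rfl, this]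
  ring

lemma aux_d3 : ∀ x ∈ s, iteratedDerivWithin 3 (fun x => c * Real.sin (a*x)) s x
    = -(c * a^3) * Real.cos (a*x) := by
  intro x hx
  rw [show (3:ℕ) = 2 + 1 from rfl, iteratedDerivWithin_succ]
  rw [derivWithin_congr (aux_d2 a c hs) (aux_d2 a c hs x hx)]
  have := (aux_hasDerivAt_sin a (-(c*a^2)) x).hasDerivWithinAt.derivWithin (hs x hx)
  rw [show (fun x => -(c*a^2) * Real.sin (a*x)) = (fun x => (-(c*a^2)) * Real.sin (a*x)) from rfl,
    this]
  ring

lemma aux_d4 : ∀ x ∈ s, iteratedDerivWithin 4 (fun x => c * Real.sin (a*x)) s x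
    = c * a^4 * Real.sin (a*x) := by
  intro x hx
  rw [show (4:ℕ) = 3 + 1 from rfl, iteratedDerivWithin_succ]
  rw [derivWithin_congr (aux_d3 a c hs) (aux_d3 a c hs x hx)]
  have := (aux_hasDerivAt_cos a (-(c*a^3)) x).hasDerivWithinAt.derivWithin (hs x hx)
  rw [show (fun x => -(c*a^3) * Real.cos (a*x)) = (fun x => (-(c*a^3)) * Real.cos (a*x)) from rfl,
    this]
  ring

end aux

lemma aux_integral (a c : ℝ) (ha : a ≠ 0) (ha0 : Real.sin (2*a) = 0) :
    (∫ ξ in (0:ℝ)..1, (c * a * Real.cos (a*ξ))^2) = c^2 * a^2 / 2 := by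
  have key : ∀ x ∈ uIcc (0:ℝ) 1,
      HasDerivAt (fun ξ => (c*a)^2 * (ξ/2 + Real.sin (2*(a*ξ))/(4*a)))
        ((c * a * Real.cos (a*x))^2) x := by
    intro x _
    have h2 : HasDerivAt (fun ξ : ℝ => 2*(a*ξ)) (2*a) x := by
      simpa [mul_assoc] using (hasDerivAt_id x).const_mul (2*a)
    have hsin : HasDerivAt (fun ξ : ℝ => Real.sin (2*(a*ξ)))
        (Real.cos (2*(a*x)) * (2*a)) x := (Real.hasDerivAt_sin _).comp x h2
    have : HasDerivAt (fun ξ : ℝ => (c*a)^2 * (ξ/2 + Real.sin (2*(a*ξ))/(4*a)))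
        ((c*a)^2 * (1/2 + Real.cos (2*(a*x)) * (2*a)/(4*a))) x := by
      exact (((hasDerivAt_id x).div_const 2).add (hsin.div_const (4*a))).const_mul _
    convert this using 1
    have : Real.cos (2*(a*x)) * (2*a)/(4*a) = Real.cos (2*(a*x)) / 2 := by
      field_simp
      ring
    rw [this]
    have hc := Real.cos_sq (a*x)
    rw [mul_pow, mul_pow, hc]
  have hint : IntervalIntegrable (fun x => (c * a * Real.cos (a*x))^2)
      MeasureTheory.volume 0 1 := by
    apply Continuous.intervalIntegrable
    continuity
  have := intervalIntegral.integral_eq_sub_of_hasDerivAt key hint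
  rw [this]
  simp [ha0]
  field_simp

lemma key_sol (k β : ℝ) (n : ℕ) (hn : 1 ≤ n) (c : ℝ) (hc : c ≠ 0)
    (hc2 : c^2 * ((n:ℝ)*π)^2 / 2 = -(β + mu k n)) :
    IsStatSol k β (fun x => c * Real.sin ((n:ℝ)*π*x)) ∧
    ∃ x ∈ Icc (0:ℝ) 1, c * Real.sin ((n:ℝ)*π*x) ≠ 0 := by
  set a : ℝ := (n:ℝ)*π with ha_def
  have hnpos : (0:ℝ) < (n:ℝ) := by exact_mod_cast hn
  have ha : a ≠ 0 := by positivity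
  have hs : UniqueDiffOn ℝ (Icc (0:ℝ) 1) := uniqueDiffOn_Icc (by norm_num)
  have hsin1 : Real.sin a = 0 := by
    rw [ha_def]; exact Real.sin_nat_mul_pi n
  have hsin2 : Real.sin (2*a) = 0 := by
    rw [ha_def, show 2*((n:ℝ)*π) = ((2*n : ℕ):ℝ)*π by push_cast; ring]
    exact Real.sin_nat_mul_pi _
  have hint : (∫ ξ in (0:ℝ)..1,
      (iteratedDerivWithin 1 (fun x => c * Real.sin (a*x)) (Icc (0:ℝ) 1) ξ)^2)
      = c^2 * a^2 / 2 := by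
    rw [intervalIntegral.integral_congr (g := fun ξ => (c * a * Real.cos (a*ξ))^2)
      (by intro ξ hξ
          rw [uIcc_of_le (by norm_num : (0:ℝ) ≤ 1)] at hξ
          simp only
          rw [aux_d1 a c hs ξ hξ])]
    exact aux_integral a c ha hsin2
  have hmu : mu k n * a^2 = k + a^4 := by
    rw [mu, ha_def]
    have : ((n:ℝ)^2 * π^2) ≠ 0 := by positivity
    field_simp
  refine ⟨⟨?_, ?_, ?_, ?_, ?_, ?_⟩, ?_⟩
  · exact (contDiff_const.mul (Real.contDiff_sin.comp (contDiff_const.mul contDiff_id))).contDiffOn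
  · intro x hx
    rw [aux_d4 a c hs x hx, aux_d2 a c hs x hx, hint]
    have : β + c^2 * a^2 / 2 = -(mu k n) := by linarith [hc2]
    rw [this]
    have : c * a^4 * Real.sin (a*x) - -(mu k n) * (-(c * a^2) * Real.sin (a*x))
        + k * (c * Real.sin (a*x))
        = c * Real.sin (a*x) * (a^4 - mu k n * a^2 + k) := by ring
    rw [this, hmu]; ring
  · simp
  · simp [hsin1]
  · rw [aux_d2 a c hs 0 (by norm_num)]; simp
  · rw [aux_d2 a c hs 1 (by norm_num)]; simp [hsin1]
  · refine ⟨1/(2*(n:ℝ)), ⟨by positivity, ?_⟩, ?_⟩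
    · have hn1 : (1:ℝ) ≤ (n:ℝ) := by exact_mod_cast hn
      rw [div_le_one (by positivity)]; linarith
    · have : a * (1/(2*(n:ℝ))) = π/2 := by
        rw [ha_def]; field_simp
      rw [this, Real.sin_pi_div_two]
      simpa using hc

/-- The buckled modes `u_n^± = ±(1/(nπ))√(-2(β+μ_n(k))) sin(nπx)` are nonzero
solutions of the stationary problem whenever `β + μ_n(k) < 0`. -/
theorem stmt1 (k : ℝ) (hk : 0 < k) (n : ℕ) (hn : 1 ≤ n) (β : ℝ)
    (hβ : β + mu k n < 0) :
    (IsStatSol k β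
        (fun x => (1/((n : ℝ)*π)) * Real.sqrt (-2*(β + mu k n)) * Real.sin ((n : ℝ)*π*x)) ∧
      ∃ x ∈ Icc (0:ℝ) 1,
        (1/((n : ℝ)*π)) * Real.sqrt (-2*(β + mu k n)) * Real.sin ((n : ℝ)*π*x) ≠ 0) ∧
    (IsStatSol k β
        (fun x => -(1/((n : ℝ)*π)) * Real.sqrt (-2*(β + mu k n)) * Real.sin ((n : ℝ)*π*x)) ∧
      ∃ x ∈ Icc (0:ℝ) 1,
        -(1/((n : ℝ)*π)) * Real.sqrt (-2*(β + mu k n)) * Real.sin ((n : ℝ)*π*x) ≠ 0) := by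
  have hnpos : (0:ℝ) < (n:ℝ) := by exact_mod_cast hn
  have hpos : 0 < -2*(β + mu k n) := by linarith
  have hsq : Real.sqrt (-2*(β + mu k n)) ^ 2 = -2*(β + mu k n) :=
    Real.sq_sqrt (le_of_lt hpos)
  have hsqrt_pos : 0 < Real.sqrt (-2*(β + mu k n)) := Real.sqrt_pos.mpr hpos
  have hane : ((n:ℝ)*π) ≠ 0 := by positivity
  set c : ℝ := (1/((n : ℝ)*π)) * Real.sqrt (-2*(β + mu k n)) with hc_def
  have hc : c ≠ 0 := by
    rw [hc_def]; positivity
  have hc2 : c^2 * ((n:ℝ)*π)^2 / 2 = -(β + mu k n) := by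
    rw [hc_def, mul_pow, mul_pow, hsq]
    field_simp
  have hc2' : (-c)^2 * ((n:ℝ)*π)^2 / 2 = -(β + mu k n) := by
    rw [neg_pow]; simpa using hc2
  constructor
  · exact key_sol k β n hn c hc hc2
  · have := key_sol k β n hn (-c) (neg_ne_zero.mpr hc) hc2'
    simpa [hc_def, neg_mul] using this
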